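/- Let δ = exp(2πiν) with ν an irrational real number. Then the set {a_k(δ) : k ∈ ℕ} is dense in ℝ, where a_k(δ) := −(δ^3−1)(δ^{3k−1}+1)/(δ(δ^{3k}−1)); and similarly the set {b_k(δ) : k ∈ ℕ} with b_k(δ) := (δ^3−1)(δ^{3k+1}+1)/(δ^2(δ^{3k}−1)) is dense in ℝ. -/

import Mathlib

open Real

-- small positive element
lemma small_elt (α : ℝ) (hα : Irrational α) (ε : ℝ) (hε : 0 < ε) (hε1 : ε ≤ 1) :
    ∃ m n : ℤ, m ≠ 0 ∧ 0 < m * α + n ∧ m * α + n < ε := by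
  have hdense : Dense ((AddSubgroup.closure {α, (1:ℝ)} : AddSubgroup ℝ) : Set ℝ) := by
    rcases AddSubgroup.dense_or_cyclic (AddSubgroup.closure {α, (1:ℝ)}) with h | ⟨a, ha⟩
    · exact h
    · exfalso
      have hαm : α ∈ AddSubgroup.closure {α, (1:ℝ)} :=
        AddSubgroup.subset_closure (by simp)
      have h1m : (1:ℝ) ∈ AddSubgroup.closure {α, (1:ℝ)} :=
        AddSubgroup.subset_closure (by simp)
      rw [ha, AddSubgroup.mem_closure_singleton] at hαm h1m
      obtain ⟨p, hp⟩ := hαm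
      obtain ⟨q, hq⟩ := h1m
      have hq0 : q ≠ 0 := by rintro rfl; simp at hq
      refine hα ⟨(p : ℚ) / (q : ℚ), ?_⟩
      have hq' : (q : ℝ) ≠ 0 := Int.cast_ne_zero.mpr hq0
      have ha' : a = 1 / q := by
        field_simp
        rw [← hq, zsmul_eq_mul]; ring
      rw [← hp, ha']
      push_cast
      rw [zsmul_eq_mul]
      field_simp
  obtain ⟨x, hxS, hx⟩ := hdense.exists_mem_open isOpen_Ioo (Set.nonempty_Ioo.mpr hε)
  rw [SetLike.mem_coe, AddSubgroup.mem_closure_pair] at hxS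
  obtain ⟨m, n, hmn⟩ := hxS
  have hx' : 0 < m * α + n ∧ m * α + n < ε := by
    have : (m : ℝ) * α + n = x := by rw [← hmn]; simp [zsmul_eq_mul]
    rw [this]; exact ⟨hx.1, hx.2⟩
  refine ⟨m, n, ?_, hx'.1, hx'.2⟩
  rintro rfl
  have h1 : (0:ℝ) < n := by simpa using hx'.1
  have h2 : (n:ℝ) < 1 := by have := hx'.2; simp at this; linarith
  have : (0:ℤ) < n := by exact_mod_cast h1
  have : (n:ℤ) < 1 := by exact_mod_cast h2
  omega

lemma fract_dense (α : ℝ) (hα : Irrational α) (t η : ℝ) (ht0 : 0 < t) (ht1 : t < 1)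
    (hη : 0 < η) : ∃ k : ℕ, 0 < k ∧ |Int.fract ((k : ℝ) * α) - t| < η := by
  set ε := min η (min t (1 - t)) with hεdef
  have hε : 0 < ε := lt_min hη (lt_min ht0 (by linarith))
  have hεη : ε ≤ η := min_le_left _ _
  have hεt : ε ≤ t := (min_le_right _ _).trans (min_le_left _ _)
  have hεt' : ε ≤ 1 - t := (min_le_right _ _).trans (min_le_right _ _)
  obtain ⟨m, n, hm0, hβ0, hβε⟩ := small_elt α hα ε hε (by linarith)
  set β := (m : ℝ) * α + n with hβdef
  have hβ1 : β < 1 := by linarith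
  have h1t : (0:ℝ) < 1 - t := by linarith
  rcases lt_or_gt_of_ne hm0 with hm | hm
  · -- m < 0
    set j := ⌈(1 - t) / β⌉₊ with hjdef
    have hj0 : 0 < j := Nat.ceil_pos.mpr (div_pos h1t hβ0)
    have hjl : 1 - t ≤ j * β := by
      rw [← div_le_iff₀ hβ0]; exact Nat.le_ceil _
    have hju : (j : ℝ) * β < 1 - t + β := by
      have := Nat.ceil_lt_add_one (le_of_lt (div_pos h1t hβ0))
      calc (j : ℝ) * β < ((1 - t)/β + 1) * β := by
            apply mul_lt_mul_of_pos_right _ hβ0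
            exact_mod_cast this
        _ = 1 - t + β := by field_simp
    have hjβ1 : (j : ℝ) * β < 1 := by linarith
    refine ⟨j * (-m).toNat, Nat.mul_pos hj0 (by omega), ?_⟩
    have hk : ((j * (-m).toNat : ℕ) : ℝ) * α = (j * n : ℤ) + -(j * β) := by
      have : ((-m).toNat : ℝ) = -(m : ℝ) := by
        have : ((-m).toNat : ℤ) = -m := Int.toNat_of_nonneg (by omega)
        exact_mod_cast this
      push_cast [this]
      rw [hβdef]; ring
    rw [hk, Int.fract_intCast_add, Int.fract_neg, Int.fract_eq_self.mpr
        ⟨by positivity, hjβ1⟩]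
    · rw [abs_lt]; constructor <;> nlinarith
    · rw [Int.fract_eq_self.mpr ⟨by positivity, hjβ1⟩]; nlinarith
  · -- m > 0
    set j := ⌈t / β⌉₊ with hjdef
    have hj0 : 0 < j := Nat.ceil_pos.mpr (div_pos ht0 hβ0)
    have hjl : t ≤ j * β := by
      rw [← div_le_iff₀ hβ0]; exact Nat.le_ceil _
    have hju : (j : ℝ) * β < t + β := by
      have := Nat.ceil_lt_add_one (le_of_lt (div_pos ht0 hβ0))
      calc (j : ℝ) * β < (t/β + 1) * β := by
            apply mul_lt_mul_of_pos_right _ hβ0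
            exact_mod_cast this
        _ = t + β := by field_simp
    have hjβ1 : (j : ℝ) * β < 1 := by linarith
    refine ⟨j * m.toNat, Nat.mul_pos hj0 (by omega), ?_⟩
    have hk : ((j * m.toNat : ℕ) : ℝ) * α = (-(j * n) : ℤ) + (j * β) := by
      have : (m.toNat : ℝ) = (m : ℝ) := by
        have : (m.toNat : ℤ) = m := Int.toNat_of_nonneg (by omega)
        exact_mod_cast this
      push_cast [this]
      rw [hβdef]; ring
    rw [hk, Int.fract_intCast_add, Int.fract_eq_self.mpr ⟨by positivity, hjβ1⟩]
    rw [abs_lt]; constructor <;> nlinarith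

lemma dense_main (ν p q : ℝ) (hν : Irrational ν) (hp : p ≠ 0) :
    Dense {x : ℝ | ∃ k : ℕ, 0 < k ∧
      x = (p * Real.cos (3 * k * (π * ν)) + q * Real.sin (3 * k * (π * ν))) /
          Real.sin (3 * k * (π * ν))} := by
  set g : ℝ → ℝ := fun θ => (p * Real.cos θ + q * Real.sin θ) / Real.sin θ with hg
  rw [Metric.dense_iff]
  intro y r hr
  set t₀ := (y - q) / p with ht₀
  set θ₀ := π / 2 - arctan t₀ with hθ₀
  have hθ₀1 : 0 < θ₀ := by have := arctan_lt_pi_div_two t₀; rw [hθ₀]; linarith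
  have hθ₀2 : θ₀ < π := by
    have := neg_pi_div_two_lt_arctan t₀; have hπ := pi_pos; rw [hθ₀]; linarith
  have hsθ₀ : 0 < Real.sin θ₀ := sin_pos_of_pos_of_lt_pi hθ₀1 hθ₀2
  have hgy : g θ₀ = y := by
    have hca : Real.cos (arctan t₀) ≠ 0 := (cos_arctan_pos t₀).ne'
    rw [hg]
    simp only [hθ₀, Real.sin_pi_div_two_sub, Real.cos_pi_div_two_sub]
    have htan : Real.sin (arctan t₀) = t₀ * Real.cos (arctan t₀) := by
      have := Real.tan_arctan t₀
      rw [Real.tan_eq_sin_div_cos] at this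
      field_simp at this; linarith [this]
    rw [htan, ht₀]
    field_simp
    ring
  have hcont : ContinuousAt g θ₀ := by
    apply ContinuousAt.div
    · fun_prop
    · fun_prop
    · exact hsθ₀.ne'
  obtain ⟨η, hη, hball⟩ := Metric.continuousAt_iff.mp hcont r hr
  have hπ := pi_pos
  have h3ν : Irrational (3 * ν) := by
    have := hν.intCast_mul (m := 3) (by norm_num)
    simpa using this
  obtain ⟨k, hk, hfr⟩ := fract_dense (3 * ν) h3ν (θ₀ / π) (η / π) (div_pos hθ₀1 hπ)
    ((div_lt_one hπ).mpr hθ₀2) (div_pos hη hπ)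
  set θ := π * Int.fract ((k : ℝ) * (3 * ν)) with hθ
  have hdist : dist θ θ₀ < η := by
    rw [Real.dist_eq]
    have : θ - θ₀ = π * (Int.fract ((k : ℝ) * (3 * ν)) - θ₀ / π) := by
      rw [hθ]; field_simp
    rw [this, abs_mul, abs_of_pos hπ]
    calc π * |Int.fract ((k : ℝ) * (3 * ν)) - θ₀ / π| < π * (η / π) :=
          mul_lt_mul_of_pos_left hfr hπ
      _ = η := by field_simp
  have hper : g (3 * (k : ℝ) * (π * ν)) = g θ := by
    have h3 : 3 * (k : ℝ) * (π * ν) = θ + (⌊(k : ℝ) * (3 * ν)⌋ : ℤ) * π := by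
      rw [hθ, Int.fract]; push_cast; ring
    rw [hg]
    simp only [h3, Real.sin_add_int_mul_pi, Real.cos_add_int_mul_pi]
    have hne : ((-1 : ℝ)) ^ ⌊(k : ℝ) * (3 * ν)⌋ ≠ 0 := by
      apply zpow_ne_zero; norm_num
    rw [show p * ((-1 : ℝ) ^ ⌊(k : ℝ) * (3 * ν)⌋ * Real.cos θ) +
        q * ((-1 : ℝ) ^ ⌊(k : ℝ) * (3 * ν)⌋ * Real.sin θ) =
        (-1 : ℝ) ^ ⌊(k : ℝ) * (3 * ν)⌋ * (p * Real.cos θ + q * Real.sin θ) by ring,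
      mul_div_mul_left _ _ hne]
  refine ⟨g (3 * (k : ℝ) * (π * ν)), ?_, ⟨k, hk, rfl⟩⟩
  rw [Metric.mem_ball, hper, ← hgy]
  exact hball hdist

lemma exp_form (u : ℂ) (m : ℕ) :
    Complex.exp ((m : ℂ) * u * Complex.I) = Complex.exp (u * Complex.I) ^ m := by
  rw [mul_assoc, Complex.exp_nat_mul]

lemma sin_form (u c x : ℂ) (hx0 : x ≠ 0) (hx : Complex.exp (c * u * Complex.I) = x) :
    Complex.sin (c * u) = (1 - x^2) * Complex.I / (2 * x) := by
  simp only [Complex.sin]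
  rw [show -(c * u) * Complex.I = -(c * u * Complex.I) by ring, Complex.exp_neg, hx]
  field_simp

lemma cos_form (u c x : ℂ) (hx0 : x ≠ 0) (hx : Complex.exp (c * u * Complex.I) = x) :
    Complex.cos (c * u) = (x^2 + 1) / (2 * x) := by
  simp only [Complex.cos]
  rw [show -(c * u) * Complex.I = -(c * u * Complex.I) by ring, Complex.exp_neg, hx]
  field_simp

lemma key_a (ν : ℝ) (δ : ℂ) (hδ : δ = Complex.exp (2 * Real.pi * Complex.I * (ν : ℂ)))
    (k : ℕ) (hk : 0 < k) (hs3 : Real.sin (3 * (π * ν)) ≠ 0)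
    (hs : Real.sin (3 * k * (π * ν)) ≠ 0) (hd : δ ^ (3 * k) ≠ 1) :
    ((-2 * Real.sin (3 * (π * ν)) * Real.cos ((3 * k - 1) * (π * ν)) /
        Real.sin (3 * k * (π * ν)) : ℝ) : ℂ)
      = -(δ^3 - 1) * (δ^(3*k-1) + 1) / (δ * (δ^(3*k) - 1)) := by
  set u : ℂ := (π : ℂ) * ν with hu
  set e : ℂ := Complex.exp (u * Complex.I) with he
  set E : ℂ := e ^ k with hE
  have he0 : e ≠ 0 := Complex.exp_ne_zero _
  have hE0 : E ≠ 0 := pow_ne_zero _ he0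
  have hδe : δ = e ^ 2 := by
    rw [hδ, he, ← exp_form u 2]
    congr 1; push_cast; ring
  have hδ0 : δ ≠ 0 := by rw [hδe]; exact pow_ne_zero _ he0
  have h3k : Complex.exp ((3 * (k:ℂ)) * u * Complex.I) = E ^ 3 := by
    rw [show (3 * (k:ℂ)) = ((3 * k : ℕ) : ℂ) by push_cast; ring, exp_form, ← he, hE,
      ← pow_mul]
    congr 1; omega
  have hsin3 : Complex.sin (3 * u) = (1 - (e^3)^2) * Complex.I / (2 * e^3) :=
    sin_form u 3 (e^3) (pow_ne_zero _ he0)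
      (by rw [show (3:ℂ) = ((3:ℕ):ℂ) by norm_num, exp_form])
  have hsink : Complex.sin (3 * (k:ℂ) * u) = (1 - (E^3)^2) * Complex.I / (2 * E^3) :=
    sin_form u (3 * (k:ℂ)) (E^3) (pow_ne_zero _ hE0) h3k
  have hcosk1 : Complex.cos ((3 * (k:ℂ) - 1) * u)
      = (E^6 + e^2) / (2 * (E^3 * e)) := by
    rw [cos_form u _ (E^3 * e⁻¹) (by simp [hE0, he0]) (by
      rw [show (3 * (k:ℂ) - 1) * u * Complex.I
          = (3 * (k:ℂ)) * u * Complex.I + (-(u * Complex.I)) by ring,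
        Complex.exp_add, h3k, Complex.exp_neg, ← he])]
    field_simp
  have hδ3k : δ ^ (3 * k) = E ^ 6 := by
    rw [hδe, ← pow_mul, hE, ← pow_mul]; congr 1; ring
  have hδ3 : δ ^ 3 = e ^ 6 := by rw [hδe, ← pow_mul]
  have hδ3k1 : δ ^ (3 * k - 1) = E ^ 6 / e ^ 2 := by
    have h1 : δ ^ (3 * k - 1) * δ = δ ^ (3 * k) := by
      rw [← pow_succ]; congr 1; omega
    rw [eq_div_iff (pow_ne_zero 2 he0), ← hδe, h1, hδ3k]
  have hE6 : E ^ 6 - 1 ≠ 0 := by rw [← hδ3k]; exact sub_ne_zero.mpr hd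
  have hsk0 : Complex.sin (3 * (k:ℂ) * u) ≠ 0 := by
    have h : ((Real.sin (3 * k * (π * ν)) : ℝ) : ℂ) = Complex.sin (3 * (k:ℂ) * u) := by
      rw [Complex.ofReal_sin]; congr 1; push_cast; ring
    rw [← h]
    exact_mod_cast hs
  have hs30 : Complex.sin (3 * u) ≠ 0 := by
    have h : ((Real.sin (3 * (π * ν)) : ℝ) : ℂ) = Complex.sin (3 * u) := by
      rw [Complex.ofReal_sin]; congr 1; push_cast; ring
    rw [← h]
    exact_mod_cast hs3
  have h1E6 : (1:ℂ) - (E^3)^2 ≠ 0 := by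
    intro h
    rw [hsink, h] at hsk0
    simp at hsk0
  have h1e6 : (1:ℂ) - (e^3)^2 ≠ 0 := by
    intro h
    rw [hsin3, h] at hs30
    simp at hs30
  push_cast [Complex.ofReal_sin, Complex.ofReal_cos]
  rw [show ((3:ℂ) * ((π:ℂ) * ν)) = 3 * u by rw [hu],
    show ((3:ℂ) * (k:ℂ) - 1) * ((π:ℂ) * ν) = (3 * (k:ℂ) - 1) * u by rw [hu],
    show ((3:ℂ) * (k:ℂ) * ((π:ℂ) * ν)) = 3 * (k:ℂ) * u by rw [hu],
    div_eq_div_iff hsk0 (mul_ne_zero hδ0 (sub_ne_zero.mpr hd)),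
    hsin3, hcosk1, hsink, hδ3, hδ3k, hδ3k1, hδe]
  field_simp [he0, hE0]
  ring

lemma key_b (ν : ℝ) (δ : ℂ) (hδ : δ = Complex.exp (2 * Real.pi * Complex.I * (ν : ℂ)))
    (k : ℕ) (hk : 0 < k) (hs3 : Real.sin (3 * (π * ν)) ≠ 0)
    (hs : Real.sin (3 * k * (π * ν)) ≠ 0) (hd : δ ^ (3 * k) ≠ 1) :
    ((2 * Real.sin (3 * (π * ν)) * Real.cos ((3 * k + 1) * (π * ν)) /
        Real.sin (3 * k * (π * ν)) : ℝ) : ℂ)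
      = (δ^3 - 1) * (δ^(3*k+1) + 1) / (δ^2 * (δ^(3*k) - 1)) := by
  set u : ℂ := (π : ℂ) * ν with hu
  set e : ℂ := Complex.exp (u * Complex.I) with he
  set E : ℂ := e ^ k with hE
  have he0 : e ≠ 0 := Complex.exp_ne_zero _
  have hE0 : E ≠ 0 := pow_ne_zero _ he0
  have hδe : δ = e ^ 2 := by
    rw [hδ, he, ← exp_form u 2]
    congr 1; push_cast; ring
  have hδ0 : δ ≠ 0 := by rw [hδe]; exact pow_ne_zero _ he0
  have h3k : Complex.exp ((3 * (k:ℂ)) * u * Complex.I) = E ^ 3 := by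
    rw [show (3 * (k:ℂ)) = ((3 * k : ℕ) : ℂ) by push_cast; ring, exp_form, ← he, hE,
      ← pow_mul]
    congr 1; omega
  have hsin3 : Complex.sin (3 * u) = (1 - (e^3)^2) * Complex.I / (2 * e^3) :=
    sin_form u 3 (e^3) (pow_ne_zero _ he0)
      (by rw [show (3:ℂ) = ((3:ℕ):ℂ) by norm_num, exp_form])
  have hsink : Complex.sin (3 * (k:ℂ) * u) = (1 - (E^3)^2) * Complex.I / (2 * E^3) :=
    sin_form u (3 * (k:ℂ)) (E^3) (pow_ne_zero _ hE0) h3k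
  have hcosk1 : Complex.cos ((3 * (k:ℂ) + 1) * u)
      = ((E^3 * e)^2 + 1) / (2 * (E^3 * e)) := by
    refine cos_form u _ _ (by simp [hE0, he0]) ?_
    rw [show (3 * (k:ℂ) + 1) * u * Complex.I
        = (3 * (k:ℂ)) * u * Complex.I + u * Complex.I by ring,
      Complex.exp_add, h3k, ← he]
  have hδ3k : δ ^ (3 * k) = E ^ 6 := by
    rw [hδe, ← pow_mul, hE, ← pow_mul]; congr 1; ring
  have hδ3 : δ ^ 3 = e ^ 6 := by rw [hδe, ← pow_mul]
  have hδ3k1 : δ ^ (3 * k + 1) = E ^ 6 * e ^ 2 := by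
    rw [pow_succ, hδ3k, hδe]
  have hsk0 : Complex.sin (3 * (k:ℂ) * u) ≠ 0 := by
    have h : ((Real.sin (3 * k * (π * ν)) : ℝ) : ℂ) = Complex.sin (3 * (k:ℂ) * u) := by
      rw [Complex.ofReal_sin]; congr 1; push_cast; ring
    rw [← h]
    exact_mod_cast hs
  push_cast [Complex.ofReal_sin, Complex.ofReal_cos]
  rw [show ((3:ℂ) * ((π:ℂ) * ν)) = 3 * u by rw [hu],
    show ((3:ℂ) * (k:ℂ) + 1) * ((π:ℂ) * ν) = (3 * (k:ℂ) + 1) * u by rw [hu],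
    show ((3:ℂ) * (k:ℂ) * ((π:ℂ) * ν)) = 3 * (k:ℂ) * u by rw [hu],
    div_eq_div_iff hsk0 (mul_ne_zero (pow_ne_zero 2 hδ0) (sub_ne_zero.mpr hd)),
    hsin3, hcosk1, hsink, hδ3, hδ3k, hδ3k1, hδe]
  field_simp [he0, hE0]
  ring

theorem stmt_8 (ν : ℝ) (hν : Irrational ν) (δ : ℂ)
    (hδ : δ = Complex.exp (2 * Real.pi * Complex.I * (ν : ℂ))) :
    Dense {x : ℝ | ∃ k : ℕ, 0 < k ∧
        (x : ℂ) = -(δ^3 - 1) * (δ^(3*k-1) + 1) / (δ * (δ^(3*k) - 1))} ∧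
    Dense {x : ℝ | ∃ k : ℕ, 0 < k ∧
        (x : ℂ) = (δ^3 - 1) * (δ^(3*k+1) + 1) / (δ^2 * (δ^(3*k) - 1))} := by
  have hπ : (0:ℝ) < π := Real.pi_pos
  have hirr : ∀ m : ℕ, m ≠ 0 → Irrational ((m : ℝ) * ν) := fun m hm => hν.natCast_mul hm
  have hsk : ∀ k : ℕ, 0 < k → Real.sin (3 * (k:ℝ) * (π * ν)) ≠ 0 := by
    intro k hk h
    obtain ⟨n, hn⟩ := Real.sin_eq_zero_iff.mp h
    have h1 : π * (((3*k : ℕ) : ℝ) * ν) = π * n := by push_cast; linear_combination -hn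
    have h2 := mul_left_cancel₀ (ne_of_gt hπ) h1
    exact (hirr (3*k) (by omega)).ne_int n h2
  have hs3 : Real.sin (3 * (π * ν)) ≠ 0 := by
    intro h
    obtain ⟨n, hn⟩ := Real.sin_eq_zero_iff.mp h
    have h1 : π * (((3 : ℕ) : ℝ) * ν) = π * n := by push_cast; linear_combination -hn
    have h2 := mul_left_cancel₀ (ne_of_gt hπ) h1
    exact (hirr 3 (by omega)).ne_int n h2
  have hc1 : Real.cos (π * ν) ≠ 0 := by
    intro h
    obtain ⟨n, hn⟩ := Real.cos_eq_zero_iff.mp h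
    have h1 : π * (((2 : ℕ) : ℝ) * ν) = π * ((2*n+1 : ℤ) : ℝ) := by
      push_cast; linear_combination 2 * hn
    have h2 := mul_left_cancel₀ (ne_of_gt hπ) h1
    exact (hirr 2 (by omega)).ne_int (2*n+1) h2
  have hd : ∀ k : ℕ, 0 < k → δ ^ (3*k) ≠ 1 := by
    intro k hk h
    rw [hδ, ← Complex.exp_nat_mul] at h
    obtain ⟨n, hn⟩ := Complex.exp_eq_one_iff.mp h
    have h3 : ((2:ℂ) * (π:ℂ) * Complex.I) ≠ 0 :=
      mul_ne_zero (mul_ne_zero two_ne_zero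
        (Complex.ofReal_ne_zero.mpr Real.pi_ne_zero)) Complex.I_ne_zero
    have h2 : ((((3*k : ℕ) : ℝ) * ν : ℝ) : ℂ) * (2 * (π:ℂ) * Complex.I)
        = ((n : ℝ) : ℂ) * (2 * (π:ℂ) * Complex.I) := by
      push_cast
      push_cast at hn
      linear_combination hn
    have h4 := mul_right_cancel₀ h3 h2
    have h5 : ((3*k : ℕ) : ℝ) * ν = n := by exact_mod_cast h4
    exact (hirr (3*k) (by omega)).ne_int n h5
  constructor
  · have hset : {x : ℝ | ∃ k : ℕ, 0 < k ∧
        (x : ℂ) = -(δ^3 - 1) * (δ^(3*k-1) + 1) / (δ * (δ^(3*k) - 1))}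
        = {x : ℝ | ∃ k : ℕ, 0 < k ∧
          x = ((-2 * Real.sin (3 * (π * ν)) * Real.cos (π * ν)) * Real.cos (3 * k * (π * ν))
            + (-2 * Real.sin (3 * (π * ν)) * Real.sin (π * ν)) * Real.sin (3 * k * (π * ν))) /
            Real.sin (3 * k * (π * ν))} := by
      ext x
      simp only [Set.mem_setOf_eq]
      refine exists_congr fun k => and_congr_right fun hk => ?_
      rw [← key_a ν δ hδ k hk hs3 (hsk k hk) (hd k hk), Complex.ofReal_inj]
      have hreal : -2 * Real.sin (3 * (π * ν)) * Real.cos ((3 * k - 1) * (π * ν)) /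
          Real.sin (3 * k * (π * ν))
          = ((-2 * Real.sin (3 * (π * ν)) * Real.cos (π * ν)) * Real.cos (3 * k * (π * ν))
            + (-2 * Real.sin (3 * (π * ν)) * Real.sin (π * ν)) * Real.sin (3 * k * (π * ν))) /
            Real.sin (3 * k * (π * ν)) := by
        congr 1
        rw [show ((3 * (k:ℝ) - 1) * (π * ν)) = 3 * k * (π * ν) - π * ν by ring, Real.cos_sub]
        ring
      rw [hreal]
    rw [hset]
    exact dense_main ν _ _ hν
      (mul_ne_zero (mul_ne_zero (by norm_num) hs3) hc1)
  · have hset : {x : ℝ | ∃ k : ℕ, 0 < k ∧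
        (x : ℂ) = (δ^3 - 1) * (δ^(3*k+1) + 1) / (δ^2 * (δ^(3*k) - 1))}
        = {x : ℝ | ∃ k : ℕ, 0 < k ∧
          x = ((2 * Real.sin (3 * (π * ν)) * Real.cos (π * ν)) * Real.cos (3 * k * (π * ν))
            + (-(2 * Real.sin (3 * (π * ν)) * Real.sin (π * ν))) * Real.sin (3 * k * (π * ν))) /
            Real.sin (3 * k * (π * ν))} := by
      ext x
      simp only [Set.mem_setOf_eq]
      refine exists_congr fun k => and_congr_right fun hk => ?_
      rw [← key_b ν δ hδ k hk hs3 (hsk k hk) (hd k hk), Complex.ofReal_inj]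
      have hreal : 2 * Real.sin (3 * (π * ν)) * Real.cos ((3 * k + 1) * (π * ν)) /
          Real.sin (3 * k * (π * ν))
          = ((2 * Real.sin (3 * (π * ν)) * Real.cos (π * ν)) * Real.cos (3 * k * (π * ν))
            + (-(2 * Real.sin (3 * (π * ν)) * Real.sin (π * ν))) * Real.sin (3 * k * (π * ν))) /
            Real.sin (3 * k * (π * ν)) := by
        congr 1
        rw [show ((3 * (k:ℝ) + 1) * (π * ν)) = 3 * k * (π * ν) + π * ν by ring, Real.cos_add]
        ring
      rw [hreal]
    rw [hset]
    exact dense_main ν _ _ hν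
      (mul_ne_zero (mul_ne_zero (by norm_num) hs3) hc1)
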